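/- With the polarization vectors ε_1(k) = (k_2, −k_1, 0)/√(k_1²+k_2²), ε_2(k) = (k/|k|) ∧ ε_1(k), there exists a constant C such that for all k with (k_1, k_2) ≠ 0 and each λ ∈ {1,2}, |∇_k ( |k|^{-1/2} ε_λ(k) )| ≤ C / ( |k|^{1/2} √(k_1² + k_2²) ). -/

import Mathlib

open scoped BigOperators

noncomputable section

def eps1 (k : Fin 3 → ℝ) : Fin 3 → ℝ :=
  fun i => ![k 1, -k 0, 0] i / Real.sqrt (k 0 ^ 2 + k 1 ^ 2)

def nm3 (k : Fin 3 → ℝ) : ℝ := Real.sqrt (∑ i, k i ^ 2)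

def eps2 (k : Fin 3 → ℝ) : Fin 3 → ℝ :=
  crossProduct (fun i => k i / nm3 k) (eps1 k)

def cross3 : (Fin 3 → ℝ) →L[ℝ] (Fin 3 → ℝ) →L[ℝ] (Fin 3 → ℝ) :=
  LinearMap.toContinuousLinearMap
    ({ toFun := fun a => LinearMap.toContinuousLinearMap (crossProduct a)
       map_add' := by intro a b; ext v i; simp [map_add]
       map_smul' := by intro c a; ext v i; simp [map_smul] } :
      (Fin 3 → ℝ) →ₗ[ℝ] (Fin 3 → ℝ) →L[ℝ] (Fin 3 → ℝ))

lemma cross3_apply (a b : Fin 3 → ℝ) : cross3 a b = crossProduct a b := rfl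

lemma cross_norm_le (a b : Fin 3 → ℝ) : ‖crossProduct a b‖ ≤ 2 * (‖a‖ * ‖b‖) := by
  have ha : ∀ i, |a i| ≤ ‖a‖ := fun i => norm_le_pi_norm a i
  have hb : ∀ i, |b i| ≤ ‖b‖ := fun i => norm_le_pi_norm b i
  have key : ∀ i j l m : Fin 3, |a i * b j - a l * b m| ≤ 2 * (‖a‖ * ‖b‖) := by
    intro i j l m
    calc |a i * b j - a l * b m| ≤ |a i * b j| + |a l * b m| := abs_sub _ _
      _ ≤ ‖a‖ * ‖b‖ + ‖a‖ * ‖b‖ := by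
          gcongr <;> exact (abs_mul _ _).le.trans
            (mul_le_mul (ha _) (hb _) (abs_nonneg _) (norm_nonneg _))
      _ = 2 * (‖a‖ * ‖b‖) := by ring
  rw [cross_apply]
  refine (pi_norm_le_iff_of_nonneg (by positivity)).2 fun i => ?_
  fin_cases i <;> simpa using key _ _ _ _

lemma cross3_norm : ‖cross3‖ ≤ 2 := by
  refine ContinuousLinearMap.opNorm_le_bound _ (by norm_num) fun a => ?_
  refine ContinuousLinearMap.opNorm_le_bound _ (by positivity) fun b => ?_
  rw [cross3_apply]
  calc ‖crossProduct a b‖ ≤ 2 * (‖a‖ * ‖b‖) := cross_norm_le a b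
    _ = 2 * ‖a‖ * ‖b‖ := by ring

set_option maxHeartbeats 1000000 in
open ContinuousLinearMap in
/-- There is a constant `C` such that away from the `k₃`-axis,
`|∇_k(|k|^{-1/2} ε_λ(k))| ≤ C/(|k|^{1/2} √(k₁²+k₂²))` for `λ = 1, 2`. -/
theorem stmt8 :
    ∃ C : ℝ, ∀ k : Fin 3 → ℝ, k 0 ^ 2 + k 1 ^ 2 ≠ 0 →
      ‖fderiv ℝ (fun q : Fin 3 → ℝ => (nm3 q ^ (-(1 / 2 : ℝ))) • eps1 q) k‖ ≤
          C / (nm3 k ^ ((1 / 2 : ℝ)) * Real.sqrt (k 0 ^ 2 + k 1 ^ 2))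
      ∧ ‖fderiv ℝ (fun q : Fin 3 → ℝ => (nm3 q ^ (-(1 / 2 : ℝ))) • eps2 q) k‖ ≤
          C / (nm3 k ^ ((1 / 2 : ℝ)) * Real.sqrt (k 0 ^ 2 + k 1 ^ 2)) := by
  refine ⟨17, fun k hk => ?_⟩
  have hs : 0 < k 0 ^ 2 + k 1 ^ 2 := lt_of_le_of_ne (by positivity) (Ne.symm hk)
  set ρ := Real.sqrt (k 0 ^ 2 + k 1 ^ 2) with hρdef
  have hρ0 : 0 < ρ := Real.sqrt_pos.2 hs
  have hk01 : ∀ i : Fin 3, i = 0 ∨ i = 1 → |k i| ≤ ρ := by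
    rintro i (rfl | rfl) <;>
      · rw [← Real.sqrt_sq_eq_abs]
        exact Real.sqrt_le_sqrt (by nlinarith [sq_nonneg (k 0), sq_nonneg (k 1)])
  have hts : 0 < ∑ i, k i ^ 2 := by
    rw [Fin.sum_univ_three]; nlinarith [sq_nonneg (k 2)]
  have hn0 : 0 < nm3 k := Real.sqrt_pos.2 hts
  have hρn : ρ ≤ nm3 k := by
    refine Real.sqrt_le_sqrt ?_
    rw [Fin.sum_univ_three]; nlinarith [sq_nonneg (k 2)]
  have hkin : ∀ i, |k i| ≤ nm3 k := by
    intro i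
    rw [← Real.sqrt_sq_eq_abs]
    exact Real.sqrt_le_sqrt
      (Finset.single_le_sum (f := fun j => k j ^ 2) (fun j _ => sq_nonneg _) (Finset.mem_univ i))
  have hknorm : ‖k‖ ≤ nm3 k :=
    (pi_norm_le_iff_of_nonneg hn0.le).2 fun i => by
      rw [Real.norm_eq_abs]; exact hkin i
  -- Stage ρ : derivative of q ↦ √(q₀² + q₁²)
  have hDs : HasFDerivAt (fun q : Fin 3 → ℝ => q 0 ^ 2 + q 1 ^ 2)
      (((2:ℕ) * k 0 ^ 1) • (proj 0 : (Fin 3 → ℝ) →L[ℝ] ℝ)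
        + ((2:ℕ) * k 1 ^ 1) • (proj 1 : (Fin 3 → ℝ) →L[ℝ] ℝ)) k :=
    by have := (((hasDerivAt_pow 2 (k 0)).comp_hasFDerivAt k (hasFDerivAt_apply (𝕜 := ℝ) 0 k)).fun_add
      ((hasDerivAt_pow 2 (k 1)).comp_hasFDerivAt k (hasFDerivAt_apply (𝕜 := ℝ) 1 k))); exact this
  obtain ⟨Dρ, hDρ, hDρn⟩ :
      ∃ D, HasFDerivAt (fun q : Fin 3 → ℝ => Real.sqrt (q 0 ^ 2 + q 1 ^ 2)) D k ∧ ‖D‖ ≤ 2 := by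
    refine ⟨_, hDs.sqrt hs.ne', ?_⟩
    refine ContinuousLinearMap.opNorm_le_bound _ (by norm_num) fun v => ?_
    have h0 : |v 0| ≤ ‖v‖ := norm_le_pi_norm v 0
    have h1 : |v 1| ≤ ‖v‖ := norm_le_pi_norm v 1
    simp only [ContinuousLinearMap.smul_apply, ContinuousLinearMap.add_apply,
      ContinuousLinearMap.proj_apply, smul_eq_mul, Real.norm_eq_abs]
    have hq0 := hk01 0 (Or.inl rfl)
    have hq1 := hk01 1 (Or.inr rfl)
    rw [← hρdef] at *
    push_cast
    have e : 1 / (2 * ρ) * (2 * k 0 ^ 1 * v 0 + 2 * k 1 ^ 1 * v 1)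
        = (k 0 * v 0 + k 1 * v 1) / ρ := by field_simp
    rw [e, abs_div, abs_of_pos hρ0, div_le_iff₀ hρ0]
    calc |k 0 * v 0 + k 1 * v 1| ≤ |k 0 * v 0| + |k 1 * v 1| := abs_add_le _ _
      _ ≤ ρ * ‖v‖ + ρ * ‖v‖ := by
          gcongr <;> exact (abs_mul _ _).le.trans
            (mul_le_mul (by assumption) (by assumption) (abs_nonneg _) hρ0.le)
      _ = 2 * ‖v‖ * ρ := by ring
  -- Stage n : derivative of nm3
  have hDt : HasFDerivAt (fun q : Fin 3 → ℝ => ∑ i, q i ^ 2)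
      (∑ i, ((2:ℕ) * k i ^ 1) • (proj i : (Fin 3 → ℝ) →L[ℝ] ℝ)) k :=
    HasFDerivAt.fun_sum fun i _ =>
      by have := (hasDerivAt_pow 2 (k i)).comp_hasFDerivAt k (hasFDerivAt_apply (𝕜 := ℝ) i k); exact this
  obtain ⟨Dn, hDn, hDnn⟩ : ∃ D, HasFDerivAt nm3 D k ∧ ‖D‖ ≤ 3 := by
    refine ⟨_, hDt.sqrt hts.ne', ?_⟩
    refine ContinuousLinearMap.opNorm_le_bound _ (by norm_num) fun v => ?_
    have hv : ∀ i : Fin 3, |v i| ≤ ‖v‖ := fun i => norm_le_pi_norm v i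
    simp only [ContinuousLinearMap.smul_apply, ContinuousLinearMap.coe_sum',
      Finset.sum_apply, ContinuousLinearMap.proj_apply, smul_eq_mul, Real.norm_eq_abs,
      Fin.sum_univ_three, Pi.smul_apply, Pi.add_apply, ContinuousLinearMap.add_apply]
    have hN : Real.sqrt (k 0 ^ 2 + k 1 ^ 2 + k 2 ^ 2) = nm3 k := by
      rw [nm3, Fin.sum_univ_three]
    rw [hN]
    push_cast
    have e : 1 / (2 * nm3 k) * (2 * k 0 ^ 1 * v 0 + 2 * k 1 ^ 1 * v 1 + 2 * k 2 ^ 1 * v 2)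
        = (k 0 * v 0 + k 1 * v 1 + k 2 * v 2) / nm3 k := by
      field_simp
    rw [e, abs_div, abs_of_pos hn0, div_le_iff₀ hn0]
    calc |k 0 * v 0 + k 1 * v 1 + k 2 * v 2|
        ≤ |k 0 * v 0 + k 1 * v 1| + |k 2 * v 2| := abs_add_le _ _
      _ ≤ |k 0 * v 0| + |k 1 * v 1| + |k 2 * v 2| := by gcongr; exact abs_add_le _ _
      _ ≤ nm3 k * ‖v‖ + nm3 k * ‖v‖ + nm3 k * ‖v‖ := by
          gcongr <;> exact (abs_mul _ _).le.trans
            (mul_le_mul (hkin _) (hv _) (abs_nonneg _) hn0.le)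
      _ = 3 * ‖v‖ * nm3 k := by ring
  -- the linear map w ↦ (w₁, -w₀, 0)
  set Lv : (Fin 3 → ℝ) →L[ℝ] (Fin 3 → ℝ) :=
    ContinuousLinearMap.pi ![proj 1, -(proj 0), 0] with hLvdef
  have hLva : ∀ (w : Fin 3 → ℝ) (i : Fin 3), Lv w i = ![w 1, -w 0, 0] i := by
    intro w i
    fin_cases i <;> simp [hLvdef, ContinuousLinearMap.pi_apply]
  have hLvn : ‖Lv‖ ≤ 1 := by
    refine ContinuousLinearMap.opNorm_le_bound _ zero_le_one fun w => ?_
    rw [one_mul]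
    refine (pi_norm_le_iff_of_nonneg (norm_nonneg w)).2 fun i => ?_
    rw [hLva]
    have hw : ∀ j, |w j| ≤ ‖w‖ := fun j => norm_le_pi_norm w j
    fin_cases i <;> simp [abs_neg] <;>
      first | exact hw _ | exact norm_nonneg w
  have hv : HasFDerivAt (fun q : Fin 3 → ℝ => ![q 1, -q 0, 0]) Lv k := by
    have h : (fun q : Fin 3 → ℝ => ![q 1, -q 0, 0]) = fun q => Lv q := by
      funext q i; rw [hLva]
    rw [h]; exact Lv.hasFDerivAt
  have hvk : ∀ i, |(![k 1, -k 0, 0] : Fin 3 → ℝ) i| ≤ ρ := by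
    intro i
    fin_cases i <;> simp [abs_neg] <;>
      first | exact hk01 1 (Or.inr rfl) | exact hk01 0 (Or.inl rfl) | exact hρ0.le
  have hvknorm : ‖(![k 1, -k 0, 0] : Fin 3 → ℝ)‖ ≤ ρ :=
    (pi_norm_le_iff_of_nonneg hρ0.le).2 fun i => by rw [Real.norm_eq_abs]; exact hvk i
  -- eps1 as a smul
  have e1 : eps1 = fun q : Fin 3 → ℝ =>
      (Real.sqrt (q 0 ^ 2 + q 1 ^ 2))⁻¹ • (![q 1, -q 0, 0] : Fin 3 → ℝ) := by
    funext q i; simp [eps1, div_eq_inv_mul]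
  have hinvρ : HasFDerivAt (fun q : Fin 3 → ℝ => (Real.sqrt (q 0 ^ 2 + q 1 ^ 2))⁻¹)
      ((-(ρ ^ 2)⁻¹) • Dρ) k :=
    (hasDerivAt_inv hρ0.ne').comp_hasFDerivAt k hDρ
  have hD1 : HasFDerivAt eps1
      (ρ⁻¹ • Lv + ((-(ρ ^ 2)⁻¹) • Dρ).smulRight (![k 1, -k 0, 0] : Fin 3 → ℝ)) k := by
    rw [e1]; exact hinvρ.smul hv
  have hD1n : ‖ρ⁻¹ • Lv + ((-(ρ ^ 2)⁻¹) • Dρ).smulRight (![k 1, -k 0, 0] : Fin 3 → ℝ)‖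
      ≤ 3 / ρ := by
    refine (norm_add_le _ _).trans ?_
    have t1 : ‖ρ⁻¹ • Lv‖ ≤ ρ⁻¹ := by
      refine (norm_smul_le (ρ⁻¹) Lv).trans ?_
      rw [Real.norm_eq_abs, abs_inv, abs_of_pos hρ0]
      calc ρ⁻¹ * ‖Lv‖ ≤ ρ⁻¹ * 1 := by gcongr
        _ = ρ⁻¹ := mul_one _
    have t2 : ‖((-(ρ ^ 2)⁻¹) • Dρ).smulRight (![k 1, -k 0, 0] : Fin 3 → ℝ)‖
        ≤ (ρ ^ 2)⁻¹ * 2 * ρ := by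
      rw [ContinuousLinearMap.norm_smulRight_apply]
      have h1 : ‖(-(ρ ^ 2)⁻¹) • Dρ‖ ≤ (ρ ^ 2)⁻¹ * 2 := by
        refine (norm_smul_le (-(ρ ^ 2)⁻¹) Dρ).trans ?_
        rw [Real.norm_eq_abs, abs_neg, abs_inv, abs_of_pos (by positivity)]
        gcongr
      exact mul_le_mul h1 hvknorm (norm_nonneg _) (by positivity)
    have harith : ρ⁻¹ + (ρ ^ 2)⁻¹ * 2 * ρ = 3 / ρ := by field_simp; ring
    linarith
  have heps1k : ‖eps1 k‖ ≤ 1 := by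
    refine (pi_norm_le_iff_of_nonneg zero_le_one).2 fun i => ?_
    have h : eps1 k i = (![k 1, -k 0, 0] : Fin 3 → ℝ) i / Real.sqrt (k 0 ^ 2 + k 1 ^ 2) := rfl
    rw [Real.norm_eq_abs, h, ← hρdef, abs_div, abs_of_pos hρ0, div_le_one hρ0]
    exact hvk i
  -- derivative of u = k/|k|
  have e_u : (fun q : Fin 3 → ℝ => fun i => q i / nm3 q)
      = fun q : Fin 3 → ℝ => (nm3 q)⁻¹ • q := by
    funext q i; simp [div_eq_inv_mul]
  have hinvn : HasFDerivAt (fun q : Fin 3 → ℝ => (nm3 q)⁻¹) ((-(nm3 k ^ 2)⁻¹) • Dn) k :=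
    (hasDerivAt_inv hn0.ne').comp_hasFDerivAt k hDn
  have hDu : HasFDerivAt (fun q : Fin 3 → ℝ => fun i => q i / nm3 q)
      ((nm3 k)⁻¹ • ContinuousLinearMap.id ℝ (Fin 3 → ℝ)
        + ((-(nm3 k ^ 2)⁻¹) • Dn).smulRight k) k := by
    rw [e_u]; exact hinvn.smul (hasFDerivAt_id k)
  have hDun : ‖(nm3 k)⁻¹ • ContinuousLinearMap.id ℝ (Fin 3 → ℝ)
      + ((-(nm3 k ^ 2)⁻¹) • Dn).smulRight k‖ ≤ 4 / nm3 k := by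
    refine (norm_add_le _ _).trans ?_
    have t1 : ‖(nm3 k)⁻¹ • ContinuousLinearMap.id ℝ (Fin 3 → ℝ)‖ ≤ (nm3 k)⁻¹ := by
      refine (norm_smul_le ((nm3 k)⁻¹) (ContinuousLinearMap.id ℝ (Fin 3 → ℝ))).trans ?_
      rw [Real.norm_eq_abs, abs_inv, abs_of_pos hn0]
      calc (nm3 k)⁻¹ * ‖ContinuousLinearMap.id ℝ (Fin 3 → ℝ)‖ ≤ (nm3 k)⁻¹ * 1 := by
            gcongr; exact ContinuousLinearMap.norm_id_le
        _ = (nm3 k)⁻¹ := mul_one _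
    have t2 : ‖((-(nm3 k ^ 2)⁻¹) • Dn).smulRight k‖ ≤ (nm3 k ^ 2)⁻¹ * 3 * nm3 k := by
      rw [ContinuousLinearMap.norm_smulRight_apply]
      have h1 : ‖(-(nm3 k ^ 2)⁻¹) • Dn‖ ≤ (nm3 k ^ 2)⁻¹ * 3 := by
        refine (norm_smul_le (-(nm3 k ^ 2)⁻¹) Dn).trans ?_
        rw [Real.norm_eq_abs, abs_neg, abs_inv, abs_of_pos (by positivity)]
        gcongr
      exact mul_le_mul h1 hknorm (norm_nonneg _) (by positivity)
    have harith : (nm3 k)⁻¹ + (nm3 k ^ 2)⁻¹ * 3 * nm3 k = 4 / nm3 k := by field_simp; ring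
    linarith
  have huk : ‖(fun i => k i / nm3 k : Fin 3 → ℝ)‖ ≤ 1 := by
    refine (pi_norm_le_iff_of_nonneg zero_le_one).2 fun i => ?_
    rw [Real.norm_eq_abs, abs_div, abs_of_pos hn0, div_le_one hn0]
    exact hkin i
  -- eps2
  have e2 : eps2 = fun q : Fin 3 → ℝ => cross3 (fun i => q i / nm3 q) (eps1 q) := by
    funext q; exact (cross3_apply _ _).symm
  have hBc : HasFDerivAt (fun q : Fin 3 → ℝ => cross3 (fun i => q i / nm3 q))
      (cross3.comp ((nm3 k)⁻¹ • ContinuousLinearMap.id ℝ (Fin 3 → ℝ)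
        + ((-(nm3 k ^ 2)⁻¹) • Dn).smulRight k)) k :=
    cross3.hasFDerivAt.comp k hDu
  set Due := (nm3 k)⁻¹ • ContinuousLinearMap.id ℝ (Fin 3 → ℝ)
      + ((-(nm3 k ^ 2)⁻¹) • Dn).smulRight k with hDuedef
  set D1e := ρ⁻¹ • Lv + ((-(ρ ^ 2)⁻¹) • Dρ).smulRight (![k 1, -k 0, 0] : Fin 3 → ℝ) with hD1edef
  have hD2 : HasFDerivAt eps2
      ((cross3 (fun i => k i / nm3 k)).comp D1e + (cross3.comp Due).flip (eps1 k)) k := by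
    rw [e2]; exact hBc.clm_apply hD1
  have hD2n : ‖(cross3 (fun i => k i / nm3 k)).comp D1e + (cross3.comp Due).flip (eps1 k)‖
      ≤ 14 / ρ := by
    refine (norm_add_le _ _).trans ?_
    have c1 : ‖(cross3 (fun i => k i / nm3 k)).comp D1e‖ ≤ 2 * (3 / ρ) := by
      refine (ContinuousLinearMap.opNorm_comp_le _ _).trans ?_
      have h2 : ‖cross3 (fun i => k i / nm3 k : Fin 3 → ℝ)‖ ≤ 2 := by
        refine (cross3.le_opNorm _).trans ?_
        calc ‖cross3‖ * ‖(fun i => k i / nm3 k : Fin 3 → ℝ)‖ ≤ 2 * 1 :=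
              mul_le_mul cross3_norm huk (norm_nonneg _) (by norm_num)
          _ = 2 := mul_one _
      exact mul_le_mul h2 hD1n (norm_nonneg _) (by norm_num)
    have c2 : ‖(cross3.comp Due).flip (eps1 k)‖ ≤ 2 * (4 / nm3 k) * 1 := by
      refine (ContinuousLinearMap.le_opNorm _ _).trans ?_
      rw [ContinuousLinearMap.opNorm_flip]
      exact mul_le_mul ((ContinuousLinearMap.opNorm_comp_le _ _).trans
        (mul_le_mul cross3_norm hDun (norm_nonneg _) (by norm_num))) heps1k
        (norm_nonneg _) (by positivity)
    have h8 : 2 * (4 / nm3 k) * 1 ≤ 8 / ρ := by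
      rw [mul_one]
      have ha : (4:ℝ) / nm3 k ≤ 4 / ρ := by gcongr
      have hb : (8:ℝ) / ρ = 2 * (4 / ρ) := by ring
      linarith
    have h6 : 2 * (3 / ρ) = 6 / ρ := by ring
    have hsum : (6:ℝ) / ρ + 8 / ρ = 14 / ρ := by ring
    linarith
  have heps2k : ‖eps2 k‖ ≤ 2 := by
    have h : eps2 k = crossProduct (fun i => k i / nm3 k) (eps1 k) := rfl
    rw [h]
    refine (cross_norm_le _ _).trans ?_
    calc 2 * (‖(fun i => k i / nm3 k : Fin 3 → ℝ)‖ * ‖eps1 k‖) ≤ 2 * (1 * 1) := by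
          gcongr
      _ = 2 := by norm_num
  -- derivative of nm3 ^ (-1/2)
  have hDc : HasFDerivAt (fun q : Fin 3 → ℝ => nm3 q ^ (-(1 / 2 : ℝ)))
      (((-(1 / 2 : ℝ)) * nm3 k ^ ((-(1 / 2 : ℝ)) - 1)) • Dn) k :=
    hDn.rpow_const (Or.inl hn0.ne')
  set Dce := ((-(1 / 2 : ℝ)) * nm3 k ^ ((-(1 / 2 : ℝ)) - 1)) • Dn with hDcedef
  have hDcn : ‖Dce‖ ≤ 3 / 2 * nm3 k ^ (-(3 / 2) : ℝ) := by
    rw [hDcedef]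
    refine (norm_smul_le ((-(1 / 2 : ℝ)) * nm3 k ^ ((-(1 / 2 : ℝ)) - 1)) Dn).trans ?_
    rw [Real.norm_eq_abs,
      show (-(1 / 2 : ℝ)) - 1 = -(3 / 2 : ℝ) by norm_num, abs_mul, abs_neg,
      abs_of_pos (Real.rpow_pos_of_pos hn0 _), abs_of_pos (by norm_num : (0:ℝ) < 1/2)]
    calc 1 / 2 * nm3 k ^ (-(3 / 2) : ℝ) * ‖Dn‖ ≤ 1 / 2 * nm3 k ^ (-(3 / 2) : ℝ) * 3 := by
          gcongr
      _ = 3 / 2 * nm3 k ^ (-(3 / 2) : ℝ) := by ring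
  -- common arithmetic
  set X := nm3 k ^ ((1 / 2 : ℝ)) with hXdef
  have hX0 : 0 < X := Real.rpow_pos_of_pos hn0 _
  have ea : nm3 k ^ (-(1 / 2 : ℝ)) = X⁻¹ := Real.rpow_neg hn0.le _
  have eb : nm3 k ^ (-(3 / 2 : ℝ)) = (X * nm3 k)⁻¹ := by
    rw [Real.rpow_neg hn0.le, hXdef]
    congr 1
    rw [show (3 / 2 : ℝ) = 1 / 2 + 1 by norm_num, Real.rpow_add hn0, Real.rpow_one]
  have hXρ0 : 0 < X * ρ := mul_pos hX0 hρ0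
  have hXρinv : (X * nm3 k)⁻¹ ≤ (X * ρ)⁻¹ :=
    inv_anti₀ hXρ0 (mul_le_mul_of_nonneg_left hρn hX0.le)
  constructor
  · rw [(hDc.fun_smul hD1).fderiv]
    refine (norm_add_le _ _).trans ?_
    have t1 : ‖(nm3 k ^ (-(1 / 2 : ℝ))) • D1e‖ ≤ X⁻¹ * (3 / ρ) := by
      refine (norm_smul_le (nm3 k ^ (-(1 / 2 : ℝ))) D1e).trans ?_
      rw [Real.norm_eq_abs, abs_of_pos (Real.rpow_pos_of_pos hn0 _), ea]
      gcongr
    have t2 : ‖Dce.smulRight (eps1 k)‖ ≤ 3 / 2 * (X * nm3 k)⁻¹ * 1 := by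
      rw [ContinuousLinearMap.norm_smulRight_apply]
      have hb : (0:ℝ) ≤ 3 / 2 * (X * nm3 k)⁻¹ :=
        le_of_lt (mul_pos (by norm_num) (inv_pos.2 (mul_pos hX0 hn0)))
      exact mul_le_mul (hDcn.trans (le_of_eq (by rw [eb]))) heps1k (norm_nonneg _) hb
    have h1 : X⁻¹ * (3 / ρ) = 3 / (X * ρ) := by field_simp
    have h2 : 3 / 2 * (X * nm3 k)⁻¹ * 1 ≤ 3 / 2 / (X * ρ) := by
      rw [mul_one, div_div]
      calc 3 / 2 * (X * nm3 k)⁻¹ ≤ 3 / 2 * (X * ρ)⁻¹ :=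
            mul_le_mul_of_nonneg_left hXρinv (by norm_num)
        _ = 3 / (2 * (X * ρ)) := by rw [mul_inv, ← div_div]; ring
    have h3 : 3 / (X * ρ) + 3 / 2 / (X * ρ) ≤ 17 / (X * ρ) := by
      rw [← add_div]
      exact (div_le_div_iff_of_pos_right hXρ0).2 (by norm_num)
    linarith
  · rw [(hDc.fun_smul hD2).fderiv]
    refine (norm_add_le _ _).trans ?_
    have t1 : ‖(nm3 k ^ (-(1 / 2 : ℝ))) • ((cross3 (fun i => k i / nm3 k)).comp D1e
        + (cross3.comp Due).flip (eps1 k))‖ ≤ X⁻¹ * (14 / ρ) := by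
      refine (norm_smul_le (nm3 k ^ (-(1 / 2 : ℝ))) ((cross3 (fun i => k i / nm3 k)).comp D1e + (cross3.comp Due).flip (eps1 k))).trans ?_
      rw [Real.norm_eq_abs, abs_of_pos (Real.rpow_pos_of_pos hn0 _), ea]
      gcongr
    have t2 : ‖Dce.smulRight (eps2 k)‖ ≤ 3 / 2 * (X * nm3 k)⁻¹ * 2 := by
      rw [ContinuousLinearMap.norm_smulRight_apply]
      have hb : (0:ℝ) ≤ 3 / 2 * (X * nm3 k)⁻¹ :=
        le_of_lt (mul_pos (by norm_num) (inv_pos.2 (mul_pos hX0 hn0)))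
      exact mul_le_mul (hDcn.trans (le_of_eq (by rw [eb]))) heps2k (norm_nonneg _) hb
    have h1 : X⁻¹ * (14 / ρ) = 14 / (X * ρ) := by field_simp
    have h2 : 3 / 2 * (X * nm3 k)⁻¹ * 2 ≤ 3 / (X * ρ) := by
      calc 3 / 2 * (X * nm3 k)⁻¹ * 2 = 3 * (X * nm3 k)⁻¹ := by ring
        _ ≤ 3 * (X * ρ)⁻¹ := by
            exact mul_le_mul_of_nonneg_left hXρinv (by norm_num)
        _ = 3 / (X * ρ) := by rw [← div_eq_mul_inv]
    have h3 : 14 / (X * ρ) + 3 / (X * ρ) ≤ 17 / (X * ρ) := by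
      rw [← add_div]
      exact (div_le_div_iff_of_pos_right hXρ0).2 (by norm_num)
    linarith


end
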